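/- If G is a connected graph with n(G) ≥ 2 and k ≥ 2, then dim_ms(G ∘ K_k) ≥ n(G)(k−1), where G ∘ K_k is the lexicographic product of G with the complete graph K_k. -/

import Mathlib

open SimpleGraph

/-- The multiset representation of `u` with respect to `S`: the multiset of
distances from `u` to the vertices of `S`, counted with multiplicity. -/
noncomputable def mrep {V : Type*} (G : SimpleGraph V) (u : V) (S : Finset V) : Multiset ℕ :=
  S.val.map fun w => G.dist u w

/-- `S` is an outer multiset resolving set of `G`: the multiset representations of
the vertices outside `S` are pairwise distinct. -/
def IsOMR {V : Type*} (G : SimpleGraph V) (S : Finset V) : Prop :=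
  ∀ u ∉ S, ∀ v ∉ S, mrep G u S = mrep G v S → u = v

/-- The outer multiset dimension of `G`. -/
noncomputable def dimMS {V : Type*} (G : SimpleGraph V) [Fintype V] : ℕ :=
  sInf {n | ∃ S : Finset V, S.card = n ∧ IsOMR G S}

/-- The diameter of `G`: the largest distance between vertices of `G`. -/
noncomputable def gdiam {V : Type*} (G : SimpleGraph V) [Fintype V] : ℕ :=
  Finset.univ.sup fun p : V × V => G.dist p.1 p.2

/-- The lexicographic product of two simple graphs: `(g, h)` and `(gʹ, hʹ)` are adjacent
iff `g gʹ` is an edge of `G`, or `g = gʹ` and `h hʹ` is an edge of `H`. -/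
def lexProd {α β : Type*} (G : SimpleGraph α) (H : SimpleGraph β) : SimpleGraph (α × β) where
  Adj p q := G.Adj p.1 q.1 ∨ (p.1 = q.1 ∧ H.Adj p.2 q.2)
  symm := by
    constructor
    intro p q h
    rcases h with h | ⟨h1, h2⟩
    · exact Or.inl h.symm
    · exact Or.inr ⟨h1.symm, h2.symm⟩
  loopless := by
    constructor
    intro p h
    rcases h with h | ⟨_, h2⟩
    · exact G.ne_of_adj h rfl
    · exact H.ne_of_adj h2 rfl

/-- Distance is monotone under a graph isomorphism (one direction). -/
lemma iso_dist_le {W : Type*} {L : SimpleGraph W} (e : L ≃g L) (u v : W) :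
    L.dist (e u) (e v) ≤ L.dist u v := by
  by_cases hr : L.Reachable u v
  · obtain ⟨p, hp⟩ := hr.exists_walk_length_eq_dist
    calc L.dist (e u) (e v) ≤ (p.map e.toHom).length := L.dist_le _
    _ = p.length := p.length_map _
    _ = L.dist u v := hp
  · have h1 : L.dist u v = 0 := SimpleGraph.dist_eq_zero_of_not_reachable hr
    have h2 : ¬ L.Reachable (e u) (e v) := by
      intro h
      apply hr
      have := h.map e.symm.toHom
      simpa using this
    simp [h1, SimpleGraph.dist_eq_zero_of_not_reachable h2]

lemma iso_dist_eq {W : Type*} {L : SimpleGraph W} (e : L ≃g L) (u v : W) :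
    L.dist (e u) (e v) = L.dist u v := by
  refine le_antisymm (iso_dist_le e u v) ?_
  have := iso_dist_le e.symm (e u) (e v)
  simpa using this

theorem stmt_11 (V : Type*) [Fintype V] (G : SimpleGraph V)
    (hconn : G.Connected) (hn : 2 ≤ Fintype.card V) (k : ℕ) (hk : 2 ≤ k) :
    Fintype.card V * (k - 1) ≤ dimMS (lexProd G (⊤ : SimpleGraph (Fin k))) := by
  classical
  set L := lexProd G (⊤ : SimpleGraph (Fin k)) with hL
  -- the defining set is nonempty (univ is an OMR set)
  have hne : {n | ∃ S : Finset (V × Fin k), S.card = n ∧ IsOMR L S}.Nonempty := by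
    refine ⟨(Finset.univ : Finset (V × Fin k)).card, Finset.univ, rfl, ?_⟩
    intro u hu
    exact absurd (Finset.mem_univ u) hu
  refine le_csInf hne ?_
  rintro m ⟨S, hScard, hOMR⟩
  -- the swap automorphism: for g, h ≠ h', swapping (g,h) and (g,h')
  have key : ∀ (g : V) (h h' : Fin k), h ≠ h' →
      (g, h) ∉ S → (g, h') ∉ S → False := by
    intro g h h' hhh' hS hS'
    -- build the iso swapping second coordinate in fiber g
    let f : V × Fin k → V × Fin k := fun p =>
      (p.1, if p.1 = g then Equiv.swap h h' p.2 else p.2)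
    have hinv : Function.Involutive f := by
      rintro ⟨a, b⟩
      by_cases hp : a = g <;> simp [f, hp, Equiv.swap_apply_self]
    let e : L ≃g L := by
      refine ⟨hinv.toPerm f, ?_⟩
      rintro ⟨a, b⟩ ⟨c, d⟩
      show L.Adj (f (a, b)) (f (c, d)) ↔ L.Adj (a, b) (c, d)
      constructor <;> intro hadj <;>
        rcases hadj with hadj | ⟨h1, h2⟩
      · exact Or.inl hadj
      · have h1' : a = c := by simpa [f] using h1
        subst h1'
        refine Or.inr ⟨rfl, ?_⟩
        simp only [f, top_adj] at h2 ⊢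
        intro hpq
        subst hpq
        exact h2 rfl
      · exact Or.inl hadj
      · subst h1
        refine Or.inr ⟨rfl, ?_⟩
        simp only [f, top_adj] at h2 ⊢
        by_cases hag : a = g
        · simp only [hag, if_pos rfl]
          intro hc
          exact h2 ((Equiv.swap h h').injective hc)
        · simpa [hag] using h2
    have he1 : e (g, h) = (g, h') := by
      show f (g, h) = (g, h')
      simp [f, Equiv.swap_apply_left]
    have hefix : ∀ w ∈ S, e w = w := by
      rintro ⟨a, b⟩ hw
      show f (a, b) = (a, b)
      by_cases hw1 : a = g
      · subst hw1
        have hb : b ≠ h ∧ b ≠ h' := by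
          constructor <;> intro hc <;> subst hc
          · exact hS hw
          · exact hS' hw
        simp [f, Equiv.swap_apply_of_ne_of_ne hb.1 hb.2]
      · simp [f, hw1]
    -- mreps coincide
    have hm : mrep L (g, h) S = mrep L (g, h') S := by
      unfold mrep
      apply Multiset.map_congr rfl
      intro w hw
      have := iso_dist_eq e (g, h) w
      rw [he1, hefix w hw] at this
      exact this.symm
    exact hhh' (congrArg Prod.snd (hOMR _ hS _ hS' hm))
  -- hence snd-fibers of Sᶜ have ≤ 1 element: fst is injective on Sᶜ
  have hinj : Set.InjOn Prod.fst (↑(Sᶜ) : Set (V × Fin k)) := by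
    rintro ⟨a, b⟩ hp ⟨c, d⟩ hq hpq
    simp only [Finset.coe_compl, Set.mem_compl_iff, Finset.mem_coe] at hp hq
    simp only at hpq
    subst hpq
    by_contra hne'
    have hsnd : b ≠ d := fun hs => hne' (by rw [hs])
    exact key a b d hsnd hp hq
  have hcompl : (Sᶜ).card ≤ Fintype.card V := by
    have := Finset.card_le_card_of_injOn Prod.fst (fun x _ => Finset.mem_univ _) hinj
    simpa using this
  have hcardS : Fintype.card V * k - Fintype.card V ≤ S.card := by
    have h1 := Finset.card_compl S
    have h2 := Finset.card_le_univ S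
    have h3 : Fintype.card (V × Fin k) = Fintype.card V * k := by simp
    omega
  rw [← hScard]
  calc Fintype.card V * (k - 1) = Fintype.card V * k - Fintype.card V := by
        cases k with
        | zero => omega
        | succ n => rw [Nat.succ_sub_one, Nat.mul_succ]; omega
  _ ≤ S.card := hcardS
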